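/- arXiv:2109.04856 — 8 statements merged into one kernel-verified Lean document; each statement's English description precedes it below -/
import Mathlib

section
/- Let B₁,…,B_N (N ≥ 1) be nonempty finite axis sets with union B̄, and let S̄ be an extrusion generated set associated to this collection (i.e., S̄ = ⋂_{i=1}^N E[Bᵢ→B̄](Sᵢ) for some sets Sᵢ of points over Bᵢ), with projections S̄ᵢ := P[B̄→Bᵢ](S̄). Then S̄ = ⋂_{i=1}^N E[Bᵢ→B̄](S̄ᵢ). -/
/-- A point over an axis set `B` (a finite subset of `ℕ`): an assignment of a real
number to each coordinate in `B`. -/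
abbrev Pt (B : Finset ℕ) : Type := {n : ℕ // n ∈ B} → ℝ

/-- Projection (restriction) of a single point over `B₂` onto a sub-axis-set `B₁ ⊆ B₂`. -/
def projPt {B₁ B₂ : Finset ℕ} (h : B₁ ⊆ B₂) (v : Pt B₂) : Pt B₁ :=
  fun x => v ⟨x.1, h x.2⟩

/-- Projection of a set of points over `B₂` onto `B₁ ⊆ B₂`. -/
def proj {B₁ B₂ : Finset ℕ} (h : B₁ ⊆ B₂) (V : Set (Pt B₂)) : Set (Pt B₁) :=
  projPt h '' V

/-- Extrusion of a set of points over `B₁` to the larger axis set `B₂ ⊇ B₁`. -/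
def extr {B₁ B₂ : Finset ℕ} (h : B₁ ⊆ B₂) (W : Set (Pt B₁)) : Set (Pt B₂) :=
  { v | projPt h v ∈ W }

/-- The union of the axis sets `B₁, …, B_N`. -/
def Bunion {N : ℕ} (B : Fin N → Finset ℕ) : Finset ℕ :=
  Finset.univ.biUnion B

lemma subset_Bunion {N : ℕ} (B : Fin N → Finset ℕ) (i : Fin N) : B i ⊆ Bunion B :=
  Finset.subset_biUnion_of_mem B (Finset.mem_univ i)

/-- The neighbourhood `Mᵢ = {j : Bᵢ ∩ Bⱼ ≠ ∅}` of node `i`. -/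
def Mset {N : ℕ} (B : Fin N → Finset ℕ) (i : Fin N) : Finset (Fin N) :=
  Finset.univ.filter (fun j => (B i ∩ B j).Nonempty)

/-- The axis set `B_{Mᵢ} = ⋃_{j ∈ Mᵢ} Bⱼ`. -/
def BMset {N : ℕ} (B : Fin N → Finset ℕ) (i : Fin N) : Finset ℕ :=
  (Mset B i).biUnion B

lemma subset_BMset {N : ℕ} (B : Fin N → Finset ℕ) {i j : Fin N} (h : j ∈ Mset B i) :
    B j ⊆ BMset B i :=
  Finset.subset_biUnion_of_mem B h

lemma self_mem_Mset {N : ℕ} {B : Fin N → Finset ℕ} {i : Fin N} (h : (B i).Nonempty) :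
    i ∈ Mset B i :=
  Finset.mem_filter.mpr ⟨Finset.mem_univ i, by rwa [Finset.inter_self]⟩

/-- Theorem 1, first part: an extrusion generated set is recovered
from its projections: `S̄ = ⋂ᵢ E[Bᵢ→B̄](S̄ᵢ)`. -/
theorem extrusion_generated_eq_iInter_extr_proj
    {N : ℕ} (hN : 1 ≤ N) (B : Fin N → Finset ℕ)
    (hBne : ∀ i, (B i).Nonempty)
    (S : (i : Fin N) → Set (Pt (B i)))
    (Sbar : Set (Pt (Bunion B)))
    (hS : Sbar = ⋂ i, extr (subset_Bunion B i) (S i)) :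
    Sbar = ⋂ i, extr (subset_Bunion B i) (proj (subset_Bunion B i) Sbar) := by
  apply Set.Subset.antisymm
  · intro v hv
    exact Set.mem_iInter.mpr fun i => ⟨v, hv, rfl⟩
  · intro v hv
    rw [hS]
    refine Set.mem_iInter.mpr fun i => ?_
    obtain ⟨w, hw, hwv⟩ := Set.mem_iInter.mp hv i
    have := Set.mem_iInter.mp (hS ▸ hw) i
    simpa [extr, hwv] using this
end

section
/- Let B₁,…,B_N (N ≥ 1) be nonempty finite axis sets with union B̄, and let S̄ be a nonempty extrusion generated set associated to this collection, with projections S̄ᵢ := P[B̄→Bᵢ](S̄). Suppose for each i a set Ŝᵢ ⊆ S̄ᵢ is given, and suppose there exists at least one index j with Ŝⱼ strictly contained in S̄ⱼ. Then Ŝ := ⋂_{i=1}^N E[Bᵢ→B̄](Ŝᵢ) is strictly contained in S̄. -/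
/-- Theorem 1, second part: if `S̄ ≠ ∅`, `Ŝᵢ ⊆ S̄ᵢ` for all `i`, and
`Ŝⱼ ⊂ S̄ⱼ` strictly for some `j`, then `Ŝ = ⋂ᵢ E[Bᵢ→B̄](Ŝᵢ) ⊂ S̄` strictly. -/
theorem strict_subset_of_strict_proj_subset
    {N : ℕ} (hN : 1 ≤ N) (B : Fin N → Finset ℕ)
    (hBne : ∀ i, (B i).Nonempty)
    (S : (i : Fin N) → Set (Pt (B i)))
    (Sbar : Set (Pt (Bunion B)))
    (hS : Sbar = ⋂ i, extr (subset_Bunion B i) (S i))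
    (hne : Sbar.Nonempty)
    (Shat : (i : Fin N) → Set (Pt (B i)))
    (hsub : ∀ i, Shat i ⊆ proj (subset_Bunion B i) Sbar)
    (hstrict : ∃ j, Shat j ⊂ proj (subset_Bunion B j) Sbar) :
    (⋂ i, extr (subset_Bunion B i) (Shat i)) ⊂ Sbar := by
  obtain ⟨j, hjsub, hjne⟩ := hstrict
  constructor
  · intro v hv
    rw [hS]
    refine Set.mem_iInter.mpr fun i => ?_
    have h1 : projPt (subset_Bunion B i) v ∈ Shat i := Set.mem_iInter.mp hv i
    obtain ⟨w, hw, hwe⟩ := hsub i h1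
    rw [hS] at hw
    have h2 : projPt (subset_Bunion B i) w ∈ S i := Set.mem_iInter.mp hw i
    rwa [hwe] at h2
  · intro hcon
    apply hjne
    intro w hw
    obtain ⟨v, hv, hve⟩ := hw
    have : v ∈ ⋂ i, extr (subset_Bunion B i) (Shat i) := hcon hv
    have h3 : projPt (subset_Bunion B j) v ∈ Shat j := Set.mem_iInter.mp this j
    rwa [hve] at h3
end

section
/- With the distributed iteration Sᵢ(κ+1) = P[B_{Mᵢ}→Bᵢ]( ⋂_{j∈Mᵢ} E[Bⱼ→B_{Mᵢ}](Sⱼ(κ)) ), started from arbitrary sets Sᵢ(0) of points over Bᵢ, for every index i and every κ ∈ ℕ one has the nested inclusions S̄ᵢ ⊆ Sᵢ(κ+1) ⊆ Sᵢ(κ), where S̄ := ⋂_{i=1}^N E[Bᵢ→B̄](Sᵢ(0)) and S̄ᵢ := P[B̄→Bᵢ](S̄). -/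
/-- Lemma 1, point ii: along the distributed iteration, the sets are
nested and contain the centralized projections: `S̄ᵢ ⊆ Sᵢ(κ+1) ⊆ Sᵢ(κ)` for all `i, κ`. -/
theorem proj_subset_iterate_and_iterate_antitone
    {N : ℕ} (hN : 1 ≤ N) (B : Fin N → Finset ℕ)
    (hBne : ∀ i, (B i).Nonempty)
    (S : (i : Fin N) → ℕ → Set (Pt (B i)))
    (hiter : ∀ (i : Fin N) (κ : ℕ), S i (κ + 1) =
      proj (subset_BMset B (self_mem_Mset (hBne i)))
        (⋂ j : {j // j ∈ Mset B i}, extr (subset_BMset B j.2) (S j.1 κ)))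
    (Sbar : Set (Pt (Bunion B)))
    (hSbar : Sbar = ⋂ i, extr (subset_Bunion B i) (S i 0)) :
    ∀ (i : Fin N) (κ : ℕ),
      proj (subset_Bunion B i) Sbar ⊆ S i (κ + 1) ∧ S i (κ + 1) ⊆ S i κ := by
  subst hSbar
  have hBM : ∀ i : Fin N, BMset B i ⊆ Bunion B := fun i =>
    Finset.biUnion_subset.mpr (fun j _ => subset_Bunion B j)
  have hA : ∀ (κ : ℕ) (i : Fin N),
      proj (subset_Bunion B i) (⋂ i, extr (subset_Bunion B i) (S i 0)) ⊆ S i κ := by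
    intro κ
    induction κ with
    | zero =>
      rintro i x ⟨v, hv, rfl⟩
      exact Set.mem_iInter.mp hv i
    | succ κ ih =>
      rintro i x ⟨v, hv, rfl⟩
      rw [hiter]
      refine ⟨projPt (hBM i) v, ?_, rfl⟩
      rw [Set.mem_iInter]
      intro j
      exact ih j.1 ⟨v, hv, rfl⟩
  intro i κ
  refine ⟨hA (κ + 1) i, ?_⟩
  intro x hx
  rw [hiter] at hx
  obtain ⟨w, hw, rfl⟩ := hx
  exact Set.mem_iInter.mp hw ⟨i, self_mem_Mset (hBne i)⟩
end

section
/- With the distributed iteration Sᵢ(κ+1) = P[B_{Mᵢ}→Bᵢ]( ⋂_{j∈Mᵢ} E[Bⱼ→B_{Mᵢ}](Sⱼ(κ)) ), started from arbitrary sets Sᵢ(0) of points over Bᵢ, define Sᵢ* := ⋂_{κ∈ℕ} Sᵢ(κ). Then ⋂_{i=1}^N E[Bᵢ→B̄](Sᵢ*) = S̄, where S̄ := ⋂_{i=1}^N E[Bᵢ→B̄](Sᵢ(0)). -/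
lemma BMset_subset_Bunion {N : ℕ} (B : Fin N → Finset ℕ) (i : Fin N) :
    BMset B i ⊆ Bunion B := by
  intro n hn
  rw [BMset, Finset.mem_biUnion] at hn
  obtain ⟨j, _, hj⟩ := hn
  exact subset_Bunion B j hj

/-- Lemma 2, point ii: with `Sᵢ* = ⋂_κ Sᵢ(κ)`, the limit sets of the
distributed iteration still generate the centralized set: `⋂ᵢ E[Bᵢ→B̄](Sᵢ*) = S̄`. -/
theorem iInter_extr_limit_eq
    {N : ℕ} (hN : 1 ≤ N) (B : Fin N → Finset ℕ)
    (hBne : ∀ i, (B i).Nonempty)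
    (S : (i : Fin N) → ℕ → Set (Pt (B i)))
    (hiter : ∀ (i : Fin N) (κ : ℕ), S i (κ + 1) =
      proj (subset_BMset B (self_mem_Mset (hBne i)))
        (⋂ j : {j // j ∈ Mset B i}, extr (subset_BMset B j.2) (S j.1 κ)))
    (Sbar : Set (Pt (Bunion B)))
    (hSbar : Sbar = ⋂ i, extr (subset_Bunion B i) (S i 0)) :
    (⋂ i, extr (subset_Bunion B i) (⋂ κ : ℕ, S i κ)) = Sbar := by
  subst hSbar
  have key : ∀ κ, (⋂ i, extr (subset_Bunion B i) (S i κ)) =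
      ⋂ i, extr (subset_Bunion B i) (S i 0) := by
    intro κ
    induction κ with
    | zero => rfl
    | succ κ ih =>
      rw [← ih]
      ext v
      simp only [Set.mem_iInter, extr, Set.mem_setOf_eq]
      constructor
      · intro hv i
        have hsub : S i (κ + 1) ⊆ S i κ := by
          rw [hiter]
          rintro x ⟨w, hw, rfl⟩
          exact Set.mem_iInter.mp hw ⟨i, self_mem_Mset (hBne i)⟩
        exact hsub (hv i)
      · intro hv i
        rw [hiter]
        refine ⟨projPt (BMset_subset_Bunion B i) v, Set.mem_iInter.mpr fun j => ?_, rfl⟩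
        show projPt (subset_BMset B j.2) (projPt (BMset_subset_Bunion B i) v) ∈ S j.1 κ
        exact hv j.1
  have hextr : ∀ i, extr (subset_Bunion B i) (⋂ κ : ℕ, S i κ) =
      ⋂ κ : ℕ, extr (subset_Bunion B i) (S i κ) := by
    intro i
    ext v
    simp [extr, Set.mem_iInter]
  calc (⋂ i, extr (subset_Bunion B i) (⋂ κ : ℕ, S i κ))
      = ⋂ i, ⋂ κ : ℕ, extr (subset_Bunion B i) (S i κ) := by
        exact Set.iInter_congr hextr
    _ = ⋂ κ : ℕ, ⋂ i, extr (subset_Bunion B i) (S i κ) := Set.iInter_comm _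
    _ = ⋂ κ : ℕ, ⋂ i, extr (subset_Bunion B i) (S i 0) := by
        exact Set.iInter_congr key
    _ = ⋂ i, extr (subset_Bunion B i) (S i 0) := Set.iInter_const _
end

section
/- With the distributed iteration Sᵢ(κ+1) = P[B_{Mᵢ}→Bᵢ]( ⋂_{j∈Mᵢ} E[Bⱼ→B_{Mᵢ}](Sⱼ(κ)) ), started from arbitrary sets Sᵢ(0) of points over Bᵢ, define Sᵢ* := ⋂_{κ∈ℕ} Sᵢ(κ). Then for every index i one has the inclusion P[B_{Mᵢ}→Bᵢ]( ⋂_{j∈Mᵢ} E[Bⱼ→B_{Mᵢ}](Sⱼ*) ) ⊆ Sᵢ* (this is one inclusion of the fixed-point identity asserted for the limit sets Sᵢ* of the distributed algorithm). -/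
/-- Lemma 2, point i, one inclusion: with `Sᵢ* = ⋂_κ Sᵢ(κ)`, one has
`P[B_{Mᵢ}→Bᵢ](⋂_{j∈Mᵢ} E[Bⱼ→B_{Mᵢ}](Sⱼ*)) ⊆ Sᵢ*` for every `i`. -/
theorem proj_iInter_extr_limit_subset_limit
    {N : ℕ} (hN : 1 ≤ N) (B : Fin N → Finset ℕ)
    (hBne : ∀ i, (B i).Nonempty)
    (S : (i : Fin N) → ℕ → Set (Pt (B i)))
    (hiter : ∀ (i : Fin N) (κ : ℕ), S i (κ + 1) =
      proj (subset_BMset B (self_mem_Mset (hBne i)))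
        (⋂ j : {j // j ∈ Mset B i}, extr (subset_BMset B j.2) (S j.1 κ)))
    (i : Fin N) :
    proj (subset_BMset B (self_mem_Mset (hBne i)))
        (⋂ j : {j // j ∈ Mset B i}, extr (subset_BMset B j.2) (⋂ κ : ℕ, S j.1 κ))
      ⊆ ⋂ κ : ℕ, S i κ := by
  rintro x ⟨v, hv, rfl⟩
  simp only [Set.mem_iInter] at hv ⊢
  intro κ
  cases κ with
  | zero =>
      have h := hv ⟨i, self_mem_Mset (hBne i)⟩
      have h0 : projPt (subset_BMset B (self_mem_Mset (hBne i))) v ∈ ⋂ κ, S i κ := h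
      simpa using Set.mem_iInter.mp h0 0
  | succ κ =>
      rw [hiter i κ]
      exact ⟨v, Set.mem_iInter.mpr fun j =>
        Set.mem_iInter.mp (hv j) κ, rfl⟩
end

section
/- Let B₁,…,B_N (N ≥ 1) be nonempty finite axis sets with union B̄, let T be an extrusion generated set associated to this collection, and let Tᵢ := P[B̄→Bᵢ](T) be its projections. Then the family (T₁,…,T_N) is a fixed point of the distributed iteration: for every index i, Tᵢ = P[B_{Mᵢ}→Bᵢ]( ⋂_{j∈Mᵢ} E[Bⱼ→B_{Mᵢ}](Tⱼ) ). Consequently, if the distributed iteration is initialized with Sᵢ(0) = Tᵢ for every i, then Sᵢ(κ) = Tᵢ for every i and every κ ∈ ℕ. -/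
/-- Theorem 2: the projections `Tᵢ = P[B̄→Bᵢ](T)` of an extrusion
generated set `T` form a fixed point of the distributed iteration; consequently the
iteration initialized at the `Tᵢ` stays at the `Tᵢ` forever. -/
theorem proj_extrusion_generated_fixed_point
    {N : ℕ} (hN : 1 ≤ N) (B : Fin N → Finset ℕ)
    (hBne : ∀ i, (B i).Nonempty)
    (T : Set (Pt (Bunion B)))
    (hT : ∃ S : (i : Fin N) → Set (Pt (B i)),
      T = ⋂ i, extr (subset_Bunion B i) (S i)) :
    (∀ i : Fin N,
      proj (subset_Bunion B i) T =
        proj (subset_BMset B (self_mem_Mset (hBne i)))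
          (⋂ j : {j // j ∈ Mset B i},
            extr (subset_BMset B j.2) (proj (subset_Bunion B j.1) T))) ∧
    (∀ S : (i : Fin N) → ℕ → Set (Pt (B i)),
      (∀ i, S i 0 = proj (subset_Bunion B i) T) →
      (∀ (i : Fin N) (κ : ℕ), S i (κ + 1) =
        proj (subset_BMset B (self_mem_Mset (hBne i)))
          (⋂ j : {j // j ∈ Mset B i}, extr (subset_BMset B j.2) (S j.1 κ))) →
      ∀ (i : Fin N) (κ : ℕ), S i κ = proj (subset_Bunion B i) T) := by
  have hBM : ∀ i : Fin N, BMset B i ⊆ Bunion B := fun i =>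
    Finset.biUnion_subset.mpr fun j _ => subset_Bunion B j
  have main : ∀ i : Fin N,
      proj (subset_Bunion B i) T =
        proj (subset_BMset B (self_mem_Mset (hBne i)))
          (⋂ j : {j // j ∈ Mset B i},
            extr (subset_BMset B j.2) (proj (subset_Bunion B j.1) T)) := by
    intro i
    ext t
    constructor
    · rintro ⟨v, hv, rfl⟩
      refine ⟨projPt (hBM i) v, Set.mem_iInter.mpr fun j => ?_, rfl⟩
      exact ⟨v, hv, rfl⟩
    · rintro ⟨w, hw, rfl⟩
      exact Set.mem_iInter.mp hw ⟨i, self_mem_Mset (hBne i)⟩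
  refine ⟨main, ?_⟩
  intro S h0 hstep i κ
  induction κ generalizing i with
  | zero => exact h0 i
  | succ κ ih =>
    rw [hstep i κ]
    have h2 : (⋂ j : {j // j ∈ Mset B i}, extr (subset_BMset B j.2) (S j.1 κ)) =
        (⋂ j : {j // j ∈ Mset B i},
          extr (subset_BMset B j.2) (proj (subset_Bunion B j.1) T)) :=
      Set.iInter_congr fun j => by rw [ih j.1]
    rw [h2, ← main i]
end

section
/- Let A, B, C be finite subsets of ℕ with A ⊆ B ⊆ C, let B₁,…,B_q be finite subsets of ℕ with Bⱼ ⊆ B for every j, and let Sⱼ be a set of points over Bⱼ for each j. Then projecting the intersection of extrusions taken over B agrees with projecting the intersection of extrusions taken over the larger axis set C: P[B→A]( ⋂_{j=1}^q E[Bⱼ→B](Sⱼ) ) = P[C→A]( ⋂_{j=1}^q E[Bⱼ→C](Sⱼ) ). -/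
/-- projecting an intersection of extrusions does not depend on whether
the extrusions are taken over the intermediate axis set `B` or a larger one `C`:
`P[B→A](⋂ⱼ E[Bⱼ→B](Sⱼ)) = P[C→A](⋂ⱼ E[Bⱼ→C](Sⱼ))`. -/
theorem proj_iInter_extr_indep_of_ambient
    (A B C : Finset ℕ) (hAB : A ⊆ B) (hBC : B ⊆ C)
    (q : ℕ) (Bj : Fin q → Finset ℕ) (hBj : ∀ j, Bj j ⊆ B)
    (S : (j : Fin q) → Set (Pt (Bj j))) :
    proj hAB (⋂ j, extr (hBj j) (S j)) =
      proj (hAB.trans hBC) (⋂ j, extr ((hBj j).trans hBC) (S j)) := by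
  ext a
  constructor
  · rintro ⟨v, hv, rfl⟩
    refine ⟨fun x => if h : x.1 ∈ B then v ⟨x.1, h⟩ else 0, ?_, ?_⟩
    · simp only [Set.mem_iInter, extr, Set.mem_setOf_eq] at hv ⊢
      intro j
      have : (projPt ((hBj j).trans hBC)
          (fun x => if h : x.1 ∈ B then v ⟨x.1, h⟩ else 0) : Pt (Bj j))
          = projPt (hBj j) v := by
        funext x
        simp [projPt, hBj j x.2]
      rw [this]; exact hv j
    · funext x
      simp [projPt, hAB x.2]
  · rintro ⟨w, hw, rfl⟩
    refine ⟨projPt hBC w, ?_, rfl⟩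
    simp only [Set.mem_iInter, extr, Set.mem_setOf_eq] at hw ⊢
    intro j
    exact hw j
end

section
/- For the networked constrained system over horizon H, consider the distributed iteration on local sets: S_{kh,i}(0) := S_{kh,i}, and, with M_i² := ⋃_{j∈M_i} M_j, S_{kh,i}(κ+1) := the set of M_i-localizations of those M_i²-local trajectories whose M_j-localization lies in S_{kh,j}(κ) for every j ∈ M_i. Then: (a) for every κ ∈ ℕ, ⋂_{i=1}^N E_i(S_{kh,i}(κ)) = S̄_kh; (b) for every i and κ, P_i(S̄_kh) ⊆ S_{kh,i}(κ+1) ⊆ S_{kh,i}(κ); and (c) the family (P_i(S̄_kh))_{i=1,…,N} is a fixed point of this iteration, i.e., if the iteration is instead initialized with S_{kh,i}(0) = P_i(S̄_kh) for every i, then S_{kh,i}(κ) = P_i(S̄_kh) for every i and κ. -/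
/-- An `A`-local trajectory over horizon data: for each agent `j ∈ A` and each time
`t ∈ ℕ`, a state in `Fin (n j) → ℝ` and an input in `Fin (m j) → ℝ`. -/
abbrev LTraj {N : ℕ} (n m : Fin N → ℕ) (A : Finset (Fin N)) : Type :=
  ((j : {j // j ∈ A}) → ℕ → (Fin (n j.1) → ℝ)) ×
  ((j : {j // j ∈ A}) → ℕ → (Fin (m j.1) → ℝ))

/-- A global trajectory: for each agent `j` and time `t`, a state and an input. -/
abbrev GTraj {N : ℕ} (n m : Fin N → ℕ) : Type :=
  ((j : Fin N) → ℕ → (Fin (n j) → ℝ)) × ((j : Fin N) → ℕ → (Fin (m j) → ℝ))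

/-- A vector assigning to each agent `j ∈ A` an element of `Fin (d j) → ℝ`
(e.g. a neighbourhood state or a neighbourhood input). -/
abbrev NVec {N : ℕ} (d : Fin N → ℕ) (A : Finset (Fin N)) : Type :=
  (j : {j // j ∈ A}) → Fin (d j.1) → ℝ

/-- The `A`-localization of a global trajectory. -/
def locG {N : ℕ} (n m : Fin N → ℕ) (A : Finset (Fin N)) (xu : GTraj n m) :
    LTraj n m A :=
  (fun j t => xu.1 j.1 t, fun j t => xu.2 j.1 t)

/-- The `A`-localization of an `A'`-local trajectory, for `A ⊆ A'`. -/
def locL {N : ℕ} (n m : Fin N → ℕ) {A A' : Finset (Fin N)} (h : A ⊆ A')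
    (yv : LTraj n m A') : LTraj n m A :=
  (fun j t => yv.1 ⟨j.1, h j.2⟩ t, fun j t => yv.2 ⟨j.1, h j.2⟩ t)

/-- A networked constrained system of `N` agents over horizon `H`. -/
structure NetSys (N : ℕ) where
  /-- state dimension of agent `i` -/
  n : Fin N → ℕ
  /-- input dimension of agent `i` -/
  m : Fin N → ℕ
  /-- the horizon -/
  H : ℕ
  /-- the neighbourhood of agent `i` -/
  M : Fin N → Finset (Fin N)
  hself : ∀ i, i ∈ M i
  hsymm : ∀ i j, j ∈ M i ↔ i ∈ M j
  /-- dynamics of agent `i`, depending on the neighbourhood states and inputs -/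
  f : (i : Fin N) → NVec n (M i) × NVec m (M i) → (Fin (n i) → ℝ)
  /-- joint (static) constraints of agent `i` on its neighbourhood states and inputs -/
  I : (i : Fin N) → Set (NVec n (M i) × NVec m (M i))
  /-- state constraint set of agent `i` -/
  X : (i : Fin N) → Set (Fin (n i) → ℝ)
  /-- input constraint set of agent `i` -/
  U : (i : Fin N) → Set (Fin (m i) → ℝ)
  /-- starting neighbourhood-state set of agent `i` -/
  Sk : (i : Fin N) → Set (NVec n (M i))
  /-- transit neighbourhood-state set of agent `i` -/
  Pk : (i : Fin N) → Set (NVec n (M i))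
  /-- terminal neighbourhood-state set of agent `i` -/
  Sh : (i : Fin N) → Set (NVec n (M i))
  hSkPk : ∀ i, Sk i ⊆ Pk i

namespace NetSys

variable {N : ℕ} (sys : NetSys N)

/-- The local solution set `S_{kh,i}` of agent `i`: the admissible `Mᵢ`-local
trajectories. -/
def localSol (i : Fin N) : Set (LTraj sys.n sys.m (sys.M i)) :=
  { yv |
    (∀ t < sys.H,
        yv.1 ⟨i, sys.hself i⟩ (t + 1) = sys.f i (fun j => yv.1 j t, fun j => yv.2 j t) ∧
        (fun j => yv.1 j t, fun j => yv.2 j t) ∈ sys.I i) ∧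
    (∀ t ≤ sys.H, yv.1 ⟨i, sys.hself i⟩ t ∈ sys.X i ∧ yv.2 ⟨i, sys.hself i⟩ t ∈ sys.U i) ∧
    (fun j => yv.1 j 0) ∈ sys.Sk i ∧
    (∀ t < sys.H, (fun j => yv.1 j t) ∈ sys.Pk i) ∧
    (fun j => yv.1 j sys.H) ∈ sys.Sh i }

/-- The global solution set `S̄_kh`: the global trajectories satisfying every agent's
dynamics and constraints. -/
def globalSol : Set (GTraj sys.n sys.m) :=
  { xu | ∀ i : Fin N,
    (∀ t < sys.H,
        xu.1 i (t + 1) =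
          sys.f i (fun j => xu.1 j.1 t, fun j => xu.2 j.1 t) ∧
        ((fun j => xu.1 j.1 t, fun j => xu.2 j.1 t) :
            NVec sys.n (sys.M i) × NVec sys.m (sys.M i)) ∈ sys.I i) ∧
    (∀ t ≤ sys.H, xu.1 i t ∈ sys.X i ∧ xu.2 i t ∈ sys.U i) ∧
    ((fun j => xu.1 j.1 0 : NVec sys.n (sys.M i)) ∈ sys.Sk i) ∧
    (∀ t < sys.H, (fun j => xu.1 j.1 t : NVec sys.n (sys.M i)) ∈ sys.Pk i) ∧
    ((fun j => xu.1 j.1 sys.H : NVec sys.n (sys.M i)) ∈ sys.Sh i) }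

/-- Extrusion `Eᵢ(W)`: the global trajectories whose `Mᵢ`-localization lies in `W`. -/
def E (i : Fin N) (W : Set (LTraj sys.n sys.m (sys.M i))) : Set (GTraj sys.n sys.m) :=
  { xu | locG sys.n sys.m (sys.M i) xu ∈ W }

/-- Localization `Pᵢ(V)`: the set of `Mᵢ`-localizations of the elements of `V`. -/
def P (i : Fin N) (V : Set (GTraj sys.n sys.m)) : Set (LTraj sys.n sys.m (sys.M i)) :=
  locG sys.n sys.m (sys.M i) '' V

end NetSys

/-- Theorems 3 and Lemma 1/2 applied to the networked case: for the
distributed iteration on the local solution sets, (a) the intersection of the extrusions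
is constantly the global solution set, (b) the iterates are nested and contain the
localizations of the global solution set, and (c) the localizations `Pᵢ(S̄_kh)` form a
fixed point of the iteration. -/
theorem NetSys.distributed_iteration_properties
    {N : ℕ} (hN : 1 ≤ N) (sys : NetSys N) (hH : 1 ≤ sys.H)
    (S : (i : Fin N) → ℕ → Set (LTraj sys.n sys.m (sys.M i)))
    (hinit : ∀ i, S i 0 = sys.localSol i)
    (hiter : ∀ (i : Fin N) (κ : ℕ), S i (κ + 1) =
      locL sys.n sys.m (Finset.subset_biUnion_of_mem sys.M (sys.hself i)) ''
        { z : LTraj sys.n sys.m ((sys.M i).biUnion sys.M) |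
          ∀ j : {j // j ∈ sys.M i},
            locL sys.n sys.m (Finset.subset_biUnion_of_mem sys.M j.2) z ∈ S j.1 κ }) :
    (∀ κ : ℕ, (⋂ i, sys.E i (S i κ)) = sys.globalSol) ∧
    (∀ (i : Fin N) (κ : ℕ),
      sys.P i sys.globalSol ⊆ S i (κ + 1) ∧ S i (κ + 1) ⊆ S i κ) ∧
    (∀ S' : (i : Fin N) → ℕ → Set (LTraj sys.n sys.m (sys.M i)),
      (∀ i, S' i 0 = sys.P i sys.globalSol) →
      (∀ (i : Fin N) (κ : ℕ), S' i (κ + 1) =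
        locL sys.n sys.m (Finset.subset_biUnion_of_mem sys.M (sys.hself i)) ''
          { z : LTraj sys.n sys.m ((sys.M i).biUnion sys.M) |
            ∀ j : {j // j ∈ sys.M i},
              locL sys.n sys.m (Finset.subset_biUnion_of_mem sys.M j.2) z ∈ S' j.1 κ }) →
      ∀ (i : Fin N) (κ : ℕ), S' i κ = sys.P i sys.globalSol) := by

  classical
  have hmono : ∀ (T : (i : Fin N) → ℕ → Set (LTraj sys.n sys.m (sys.M i))),
      (∀ (i : Fin N) (κ : ℕ), T i (κ + 1) =
        locL sys.n sys.m (Finset.subset_biUnion_of_mem sys.M (sys.hself i)) ''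
          { z : LTraj sys.n sys.m ((sys.M i).biUnion sys.M) |
            ∀ j : {j // j ∈ sys.M i},
              locL sys.n sys.m (Finset.subset_biUnion_of_mem sys.M j.2) z ∈ T j.1 κ }) →
      ∀ (i : Fin N) (κ : ℕ), T i (κ + 1) ⊆ T i κ := by
    intro T hT i κ w hw
    rw [hT] at hw
    obtain ⟨z, hz, rfl⟩ := hw
    exact hz ⟨i, sys.hself i⟩
  have ha : ∀ κ : ℕ, (⋂ i, sys.E i (S i κ)) = sys.globalSol := by
    intro κ
    induction κ with
    | zero =>
      ext xu
      simp only [Set.mem_iInter, NetSys.E, Set.mem_setOf_eq, hinit]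
      constructor
      · intro h i
        exact h i
      · intro h i
        exact h i
    | succ κ ih =>
      apply subset_antisymm
      · rw [← ih]
        intro xu hxu
        simp only [Set.mem_iInter] at hxu ⊢
        intro i
        exact hmono S hiter i κ (hxu i)
      · intro xu hxu
        simp only [Set.mem_iInter]
        intro i
        show locG sys.n sys.m (sys.M i) xu ∈ S i (κ + 1)
        rw [hiter]
        refine ⟨locG sys.n sys.m ((sys.M i).biUnion sys.M) xu, ?_, rfl⟩
        intro j
        have hx : xu ∈ ⋂ i, sys.E i (S i κ) := ih ▸ hxu
        exact Set.mem_iInter.mp hx j.1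
  refine ⟨ha, ?_, ?_⟩
  · intro i κ
    refine ⟨?_, hmono S hiter i κ⟩
    rintro w ⟨xu, hxu, rfl⟩
    rw [hiter]
    refine ⟨locG sys.n sys.m ((sys.M i).biUnion sys.M) xu, ?_, rfl⟩
    intro j
    have hx : xu ∈ ⋂ i, sys.E i (S i κ) := (ha κ) ▸ hxu
    exact Set.mem_iInter.mp hx j.1
  · intro S' h0 h1 i κ
    induction κ generalizing i with
    | zero => exact h0 i
    | succ κ ih =>
      rw [h1]
      apply subset_antisymm
      · rintro w ⟨z, hz, rfl⟩
        have := hz ⟨i, sys.hself i⟩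
        rw [ih] at this
        exact this
      · rintro w ⟨xu, hxu, rfl⟩
        refine ⟨locG sys.n sys.m ((sys.M i).biUnion sys.M) xu, ?_, rfl⟩
        intro j
        rw [ih]
        exact ⟨xu, hxu, rfl⟩
end
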